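/- Let n ≥ 1, let A be an n×n real symmetric matrix with all eigenvalues in [μ, L] where 0 < μ ≤ L, let b ∈ ℝⁿ, and let f(x) = ½xᵀAx − bᵀx. Fix a step size η with 0 < η ≤ 2/(L+μ), a window length m ≥ 1, and a regularization parameter λ > 0. Given points x_{k−m}, …, x_k ∈ ℝⁿ with ∇f(x_k) ≠ 0, perform one Anderson-accelerated gradient step: let U_k be the n×m matrix whose columns are ∇f(x_k) − ∇f(x_j) for j = k−m, …, k−1; set (α_{k−m}, …, α_{k−1})ᵀ = (U_kᵀU_k + λI)⁻¹U_kᵀ∇f(x_k) and α_k = 1 − Σ_{j=k−m}^{k−1} α_j; and set x_{k+1} = Σ_{j=k−m}^{k} α_j (x_j − η∇f(x_j)). Then ‖∇f(x_{k+1})‖ ≤ δ_k (1 − ημ) ‖∇f(x_k)‖, where Π_k = I − U_k(U_kᵀU_k + λI)⁻¹U_kᵀ and δ_k = ‖Π_k∇f(x_k)‖/‖∇f(x_k)‖ satisfies δ_k ≤ 1. -/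

import Mathlib

open scoped RealInnerProductSpace Matrix
open Finset

lemma aa_tel_mul {n m k : ℕ} (M : Matrix (Fin n) (Fin m) ℝ) (N : Matrix (Fin m) (Fin k) ℝ)
    (v : EuclideanSpace ℝ (Fin k)) :
    Matrix.toEuclideanLin (M * N) v = Matrix.toEuclideanLin M (Matrix.toEuclideanLin N v) := by
  simp [Matrix.toEuclideanLin_apply, Matrix.mulVec_mulVec]

lemma aa_piLp_sum_apply {n : ℕ} {ι : Type*} (s : Finset ι)
    (f : ι → EuclideanSpace ℝ (Fin n)) (i : Fin n) :
    (∑ j ∈ s, f j) i = ∑ j ∈ s, f j i := by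
  classical
  induction s using Finset.induction with
  | empty => rfl
  | insert a s h ih => rw [Finset.sum_insert h, Finset.sum_insert h, PiLp.add_apply, ih]

lemma aa_contract_step {n : ℕ} (A : Matrix (Fin n) (Fin n) ℝ) (hA : A.IsSymm)
    (μ L η : ℝ) (hμ : 0 < μ) (hμL : μ ≤ L)
    (hspec : ∀ v : EuclideanSpace ℝ (Fin n),
      μ * ‖v‖ ^ 2 ≤ ⟪Matrix.toEuclideanLin A v, v⟫ ∧
      ⟪Matrix.toEuclideanLin A v, v⟫ ≤ L * ‖v‖ ^ 2)
    (hη0 : 0 < η) (hη : η ≤ 2 / (L + μ)) (w : EuclideanSpace ℝ (Fin n)) :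
    ‖w - η • Matrix.toEuclideanLin A w‖ ≤ (1 - η * μ) * ‖w‖ := by
  have hLμ : 0 < L + μ := by linarith
  have hη2 : η * (L + μ) ≤ 2 := by
    rw [← le_div_iff₀ hLμ] at *; linarith [hη]
  have hημ : η * μ ≤ 1 := by nlinarith
  have hAh : A.IsHermitian := by
    rwa [Matrix.IsHermitian, Matrix.conjTranspose_eq_transpose_of_trivial]
  set b := hAh.eigenvectorBasis with hb
  set lam := hAh.eigenvalues with hlam
  have heig : ∀ i, Matrix.toEuclideanLin A (b i) = lam i • b i := by
    intro i
    have h1 := hAh.mulVec_eigenvectorBasis i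
    apply (WithLp.equiv 2 _).injective
    simpa [Matrix.toEuclideanLin_apply] using h1
  have hlb : ∀ i, μ ≤ lam i ∧ lam i ≤ L := by
    intro i
    have hn1 : ‖b i‖ = 1 := b.orthonormal.1 i
    have h2 := hspec (b i)
    rw [heig i, real_inner_smul_left, real_inner_self_eq_norm_sq, hn1] at h2
    constructor <;> nlinarith [h2.1, h2.2]
  have hsymm : (Matrix.toEuclideanLin A).IsSymmetric :=
    Matrix.isHermitian_iff_isSymmetric.mp hAh
  have hrepr : ∀ i, b.repr (Matrix.toEuclideanLin A w) i = lam i * b.repr w i := by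
    intro i
    rw [b.repr_apply_apply, b.repr_apply_apply, ← hsymm (b i) w, heig i,
      real_inner_smul_left]
  have hreprQ : ∀ i, b.repr (w - η • Matrix.toEuclideanLin A w) i
      = (1 - η * lam i) * b.repr w i := by
    intro i
    rw [map_sub, map_smul]
    simp only [PiLp.sub_apply, PiLp.smul_apply, smul_eq_mul, hrepr i]
    ring
  have hns : ∀ u : EuclideanSpace ℝ (Fin n), ‖u‖ ^ 2 = ∑ i, (b.repr u i) ^ 2 := by
    intro u
    rw [← b.repr.norm_map u, EuclideanSpace.norm_eq, Real.sq_sqrt (by positivity)]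
    simp [sq_abs]
  have key : ‖w - η • Matrix.toEuclideanLin A w‖ ^ 2 ≤ ((1 - η * μ) * ‖w‖) ^ 2 := by
    rw [hns, mul_pow, hns w, Finset.mul_sum]
    apply Finset.sum_le_sum
    intro i _
    rw [hreprQ i, mul_pow]
    have h1 : (1 - η * lam i) ^ 2 ≤ (1 - η * μ) ^ 2 := by
      have h2 := (hlb i).1; have h3 := (hlb i).2
      apply sq_le_sq' <;> nlinarith
    nlinarith [sq_nonneg (b.repr w i), sq_nonneg (1 - η * μ)]
  have h0 : (0:ℝ) ≤ (1 - η * μ) * ‖w‖ := by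
    have : 0 ≤ 1 - η * μ := by linarith
    positivity
  nlinarith [norm_nonneg (w - η • Matrix.toEuclideanLin A w), key]

lemma aa_posdef_reg {p q : ℕ} (V : Matrix (Fin p) (Fin q) ℝ) (lam : ℝ) (hlam : 0 < lam) :
    (Vᵀ * V + lam • 1).PosDef := by
  rw [Matrix.posDef_iff_dotProduct_mulVec]
  constructor
  · rw [Matrix.IsHermitian, Matrix.conjTranspose_eq_transpose_of_trivial]
    rw [Matrix.transpose_add, Matrix.transpose_mul, Matrix.transpose_transpose,
      Matrix.transpose_smul, Matrix.transpose_one]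
  · intro y hy
    have h1 : star y = y := by simp
    rw [h1, Matrix.add_mulVec, dotProduct_add, Matrix.smul_mulVec,
      Matrix.one_mulVec, ← Matrix.mulVec_mulVec, Matrix.dotProduct_mulVec,
      Matrix.vecMul_transpose]
    have h2 : 0 ≤ (V *ᵥ y) ⬝ᵥ (V *ᵥ y) := by
      simpa using dotProduct_self_star_nonneg (V *ᵥ y)
    have h3 : 0 < y ⬝ᵥ lam • y := by
      rw [dotProduct_smul]
      have : 0 < y ⬝ᵥ y := by
        have := Matrix.dotProduct_self_star_pos_iff (v := y) |>.mpr hy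
        simpa using this
      exact smul_pos hlam this
    linarith

lemma aa_proj_bound {n m : ℕ} (U : Matrix (Fin n) (Fin m) ℝ) (lam : ℝ) (hlam : 0 < lam)
    (G : EuclideanSpace ℝ (Fin n)) :
    ‖Matrix.toEuclideanLin (1 - U * (Uᵀ * U + lam • 1)⁻¹ * Uᵀ) G‖ ≤ ‖G‖ := by
  set S : Matrix (Fin m) (Fin m) ℝ := Uᵀ * U + lam • 1 with hS
  set S' : Matrix (Fin n) (Fin n) ℝ := U * Uᵀ + lam • 1 with hS'
  set P : Matrix (Fin n) (Fin n) ℝ := 1 - U * S⁻¹ * Uᵀ with hPdef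
  have hSpd : S.PosDef := aa_posdef_reg U lam hlam
  have hS'pd : S'.PosDef := by
    have := aa_posdef_reg Uᵀ lam hlam
    rwa [Matrix.transpose_transpose] at this
  have hSunit : IsUnit S.det := hSpd.isUnit.map Matrix.detMonoidHom
  have hS'unit : IsUnit S'.det := hS'pd.isUnit.map Matrix.detMonoidHom
  have hpush : Uᵀ * S' = S * Uᵀ := by
    simp only [hS, hS', Matrix.mul_add, Matrix.add_mul, Matrix.mul_smul, Matrix.smul_mul,
      Matrix.mul_one, Matrix.one_mul, Matrix.mul_assoc]
  have hPS' : P * S' = lam • 1 := by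
    have h1 : U * S⁻¹ * Uᵀ * S' = U * Uᵀ := by
      rw [Matrix.mul_assoc (U * S⁻¹), hpush, ← Matrix.mul_assoc, Matrix.mul_assoc U,
        Matrix.nonsing_inv_mul S hSunit, Matrix.mul_one]
    rw [hPdef, Matrix.sub_mul, Matrix.one_mul, h1, hS']
    abel
  have hS'P : S' * P = lam • 1 := by
    have hP' : P = lam • S'⁻¹ := by
      have := congrArg (· * S'⁻¹) hPS'
      simpa [Matrix.mul_assoc, Matrix.mul_nonsing_inv S' hS'unit, Matrix.smul_mul] using this
    rw [hP', Matrix.mul_smul, Matrix.mul_nonsing_inv S' hS'unit]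
  set y := Matrix.toEuclideanLin P G with hy
  have hSy : Matrix.toEuclideanLin S' y = lam • G := by
    rw [hy, ← aa_tel_mul, hS'P]
    simp [Matrix.toEuclideanLin_apply, Matrix.smul_mulVec]
  have hGy : lam • G = Matrix.toEuclideanLin (U * Uᵀ) y + lam • y := by
    rw [← hSy, hS']
    simp [map_add, Matrix.toEuclideanLin_apply, Matrix.add_mulVec, Matrix.smul_mulVec]
  have hinner : 0 ≤ ⟪Matrix.toEuclideanLin (U * Uᵀ) y, y⟫ := by
    have hadj : Matrix.toEuclideanLin Uᵀ = LinearMap.adjoint (Matrix.toEuclideanLin U) := by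
      rw [← Matrix.toEuclideanLin_conjTranspose_eq_adjoint,
        Matrix.conjTranspose_eq_transpose_of_trivial]
    rw [aa_tel_mul, ← LinearMap.adjoint_inner_right, ← hadj]
    exact real_inner_self_nonneg
  have hexp : G = y + lam⁻¹ • Matrix.toEuclideanLin (U * Uᵀ) y := by
    have := congrArg (fun z => lam⁻¹ • z) hGy
    simpa [smul_smul, inv_mul_cancel₀ hlam.ne', add_comm] using this
  have hsq : ‖y‖ ^ 2 ≤ ‖G‖ ^ 2 := by
    rw [hexp, norm_add_sq_real]
    have h1 : 0 ≤ ⟪y, lam⁻¹ • Matrix.toEuclideanLin (U * Uᵀ) y⟫ := by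
      rw [real_inner_smul_right]
      have h2 := hinner
      rw [real_inner_comm] at h2
      positivity
    nlinarith [sq_nonneg ‖lam⁻¹ • Matrix.toEuclideanLin (U * Uᵀ) y‖]
  nlinarith [norm_nonneg y, norm_nonneg G]

/-- **Anderson-accelerated gradient step on a quadratic: one-step gain bound.**
For `f x = ½ xᵀAx − bᵀx` with symmetric `A` whose spectrum lies in `[μ, L]`,
`0 < μ ≤ L`, step size `0 < η ≤ 2/(L+μ)`, window `m ≥ 1`, regularization `lam > 0`,
the Anderson step satisfies `‖∇f(x_{k+1})‖ ≤ δ_k (1 − ημ) ‖∇f(x_k)‖` with `δ_k ≤ 1`. -/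
theorem aa_gd_quadratic_one_step
    (n m : ℕ) (hn : 1 ≤ n) (hm : 1 ≤ m)
    (A : Matrix (Fin n) (Fin n) ℝ) (hA : A.IsSymm)
    (μ L : ℝ) (hμ : 0 < μ) (hμL : μ ≤ L)
    (hspec : ∀ v : EuclideanSpace ℝ (Fin n),
      μ * ‖v‖ ^ 2 ≤ ⟪Matrix.toEuclideanLin A v, v⟫ ∧
      ⟪Matrix.toEuclideanLin A v, v⟫ ≤ L * ‖v‖ ^ 2)
    (b : EuclideanSpace ℝ (Fin n))
    (g : EuclideanSpace ℝ (Fin n) → EuclideanSpace ℝ (Fin n))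
    (hg : ∀ z, g z = Matrix.toEuclideanLin A z - b)
    (η : ℝ) (hη0 : 0 < η) (hη : η ≤ 2 / (L + μ))
    (lam : ℝ) (hlam : 0 < lam)
    -- the window of points `x 0, …, x m`, where `x (Fin.last m)` plays the role of `x_k`
    (x : Fin (m + 1) → EuclideanSpace ℝ (Fin n))
    (hgk : g (x (Fin.last m)) ≠ 0)
    -- the matrix `U_k`, with columns `∇f(x_k) − ∇f(x_j)`, `j = k−m, …, k−1`
    (U : Matrix (Fin n) (Fin m) ℝ)
    (hU : ∀ (i : Fin n) (j : Fin m), U i j = (g (x (Fin.last m)) - g (x j.castSucc)) i)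
    -- the regularized least-squares coefficients
    (α' : Fin m → ℝ)
    (hα' : α' = ((Uᵀ * U + lam • 1)⁻¹ * Uᵀ).mulVec (g (x (Fin.last m))))
    (αk : ℝ) (hαk : αk = 1 - ∑ j, α' j)
    -- the Anderson-accelerated iterate `x_{k+1}`
    (xnew : EuclideanSpace ℝ (Fin n))
    (hxnew : xnew =
      (∑ j : Fin m, α' j • (x j.castSucc - η • g (x j.castSucc)))
        + αk • (x (Fin.last m) - η • g (x (Fin.last m))))
    -- the projection operator `Π_k` and the gain `δ_k`
    (P : Matrix (Fin n) (Fin n) ℝ)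
    (hP : P = 1 - U * (Uᵀ * U + lam • 1)⁻¹ * Uᵀ)
    (δ : ℝ)
    (hδ : δ = ‖Matrix.toEuclideanLin P (g (x (Fin.last m)))‖ / ‖g (x (Fin.last m))‖) :
    ‖g xnew‖ ≤ δ * (1 - η * μ) * ‖g (x (Fin.last m))‖ ∧ δ ≤ 1 := by
  set T : EuclideanSpace ℝ (Fin n) →ₗ[ℝ] EuclideanSpace ℝ (Fin n) :=
    Matrix.toEuclideanLin A with hT
  set G : EuclideanSpace ℝ (Fin n) := g (x (Fin.last m)) with hG
  set v : EuclideanSpace ℝ (Fin n) := Matrix.toEuclideanLin P G with hv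
  have hGpos : 0 < ‖G‖ := norm_pos_iff.mpr hgk
  -- the mixing identity: the Anderson combination of gradients equals `P G`
  have hw : Matrix.toEuclideanLin (U * ((Uᵀ * U + lam • 1)⁻¹ * Uᵀ)) G
      = ∑ j, α' j • (G - g (x j.castSucc)) := by
    apply PiLp.ext
    intro i
    have hL : (Matrix.toEuclideanLin (U * ((Uᵀ * U + lam • 1)⁻¹ * Uᵀ)) G) i
        = (U *ᵥ α') i := by
      rw [hα']
      simp only [Matrix.toEuclideanLin_apply, ← Matrix.mulVec_mulVec]
    have hR : (∑ j, α' j • (G - g (x j.castSucc))) i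
        = ∑ j, α' j * (G - g (x j.castSucc)) i := by
      rw [aa_piLp_sum_apply]
      simp only [PiLp.smul_apply, smul_eq_mul]
    rw [hL, hR]
    show ∑ j, U i j * α' j = _
    exact Finset.sum_congr rfl fun j _ => by rw [hU i j, mul_comm]
  have hvG : v = G - ∑ j, α' j • (G - g (x j.castSucc)) := by
    rw [hv, hP, Matrix.mul_assoc, map_sub, LinearMap.sub_apply, hw]
    congr 1
    simp [Matrix.toEuclideanLin_apply]
  have hmix : (∑ j, α' j • g (x j.castSucc)) + αk • G = v := by
    rw [hvG, hαk, sub_smul, one_smul, Finset.sum_smul]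
    simp only [smul_sub, Finset.sum_sub_distrib]
    abel
  -- the post-gradient-step operator
  set W : EuclideanSpace ℝ (Fin n) →ₗ[ℝ] EuclideanSpace ℝ (Fin n) :=
    LinearMap.id - η • T with hW
  have hWapp : ∀ z, W z = z - η • T z := by
    intro z
    simp [hW, LinearMap.sub_apply, LinearMap.smul_apply]
  have hstep : ∀ z, g (z - η • g z) = W (g z) := by
    intro z
    rw [hWapp, hg (z - η • g z), map_sub, map_smul, hg z]
    abel
  have hb1 : (b : EuclideanSpace ℝ (Fin n)) = (∑ j, α' j • b) + αk • b := by
    have h1 : (∑ j, α' j) + αk = 1 := by rw [hαk]; ring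
    rw [← Finset.sum_smul, ← add_smul, h1, one_smul]
  have haff : g xnew
      = (∑ j, α' j • g (x j.castSucc - η • g (x j.castSucc)))
        + αk • g (x (Fin.last m) - η • g (x (Fin.last m))) := by
    rw [hg xnew, hxnew, map_add, map_sum]
    simp only [map_smul]
    rw [hb1]
    simp only [hg (x _ - η • g (x _))]
    simp only [smul_sub, Finset.sum_sub_distrib]
    abel
  have hfinal : g xnew = v - η • T v := by
    rw [haff]
    simp only [hstep]
    rw [← hWapp, ← hmix, map_add, map_sum]
    simp only [map_smul]
    rfl
  -- conclude
  have hcontr : ‖v - η • T v‖ ≤ (1 - η * μ) * ‖v‖ :=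
    aa_contract_step A hA μ L η hμ hμL hspec hη0 hη v
  have hproj : ‖v‖ ≤ ‖G‖ := by
    rw [hv, hP]
    exact aa_proj_bound U lam hlam G
  have hδv : δ * ‖G‖ = ‖v‖ := by
    rw [hδ, div_mul_cancel₀ _ hGpos.ne']
  constructor
  · calc ‖g xnew‖ = ‖v - η • T v‖ := by rw [hfinal]
      _ ≤ (1 - η * μ) * ‖v‖ := hcontr
      _ = δ * (1 - η * μ) * ‖G‖ := by rw [← hδv]; ring
  · rw [hδ, div_le_one hGpos]
    exact hproj
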